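/- Let π be a probability density on ℝ^p with f = -log π m-strongly convex and minimizer θ*. Then for any 0 < a ≤ 2, ∫ ‖θ - θ*‖₂^a π(θ) dθ ≤ (p/m)^{a/2}. -/

import Mathlib

set_option maxHeartbeats 1000000

open MeasureTheory Filter

lemma aux_gauss_int {p : ℕ} {b : ℝ} (hb : 0 < b) :
    Integrable (fun v : EuclideanSpace ℝ (Fin p) => Real.exp (-b * ‖v‖ ^ 2)) := by
  have h := (GaussianFourier.integrable_cexp_neg_mul_sq_norm_add
    (V := EuclideanSpace ℝ (Fin p)) (b := (b : ℂ)) (by simpa using hb) 0 0).norm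
  apply h.congr
  filter_upwards with v
  simp [Complex.norm_exp, ← Complex.ofReal_pow]

/-- Let pd be a probability density on ℝ^p with f = -log pd
m-strongly convex and minimizer θ*. Then for any 0 < a ≤ 2,
∫ ‖θ - θ*‖^a pd(θ) dθ ≤ (p/m)^{a/2}. -/
theorem stmt7 {p : ℕ} (hp : 0 < p) (f : EuclideanSpace ℝ (Fin p) → ℝ)
    (pd : EuclideanSpace ℝ (Fin p) → ℝ)
    (θstar : EuclideanSpace ℝ (Fin p)) (m a : ℝ) (hm : 0 < m)
    (ha : 0 < a) (ha2 : a ≤ 2)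
    (hconv : StrongConvexOn Set.univ m f)
    (hmin : IsMinOn f Set.univ θstar)
    (hpd : ∀ θ, pd θ = Real.exp (-f θ))
    (hprob : ∫ θ, pd θ = 1) :
    ∫ θ, ‖θ - θstar‖ ^ a * pd θ ≤ ((p : ℝ) / m) ^ (a / 2) := by
  obtain rfl : pd = fun θ => Real.exp (-f θ) := funext hpd
  set pd : EuclideanSpace ℝ (Fin p) → ℝ := fun θ => Real.exp (-f θ) with hpddef
  -- continuity
  have hfc : Continuous f := by
    have h1 : ConvexOn ℝ Set.univ f := hconv.convexOn fun r => by positivity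
    exact continuousOn_univ.mp (h1.continuousOn isOpen_univ)
  have hpdc : Continuous pd := Real.continuous_exp.comp hfc.neg
  have hpdpos : ∀ θ, 0 < pd θ := fun θ => Real.exp_pos _
  -- quadratic lower bound
  have key : ∀ θ, f θstar + m / 2 * ‖θ - θstar‖ ^ 2 ≤ f θ := by
    intro θ
    have hev : ∀ᶠ t : ℝ in nhdsWithin 0 (Set.Ioi 0),
        f θstar + (1 - t) * (m / 2 * ‖θ - θstar‖ ^ 2) ≤ f θ := by
      filter_upwards [Ioo_mem_nhdsGT_of_mem (by norm_num : (0:ℝ) ∈ Set.Ico 0 1)] with t ht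
      obtain ⟨ht0, ht1⟩ := ht
      have hcvx := hconv.2 (Set.mem_univ θ) (Set.mem_univ θstar) ht0.le
        (by linarith : (0:ℝ) ≤ 1 - t) (by ring)
      have hmn := hmin (Set.mem_univ (t • θ + (1 - t) • θstar))
      simp only [smul_eq_mul] at hcvx
      have h2 : f θstar ≤ t * f θ + (1 - t) * f θstar
          - t * (1 - t) * (m / 2 * ‖θ - θstar‖ ^ 2) := le_trans hmn hcvx
      have h3 : t * (f θstar + (1 - t) * (m / 2 * ‖θ - θstar‖ ^ 2)) ≤ t * f θ := by nlinarith
      exact le_of_mul_le_mul_left (by linarith) ht0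
    have htend : Tendsto (fun t : ℝ => f θstar + (1 - t) * (m / 2 * ‖θ - θstar‖ ^ 2))
        (nhdsWithin 0 (Set.Ioi 0)) (nhds (f θstar + m / 2 * ‖θ - θstar‖ ^ 2)) := by
      have hc : Continuous (fun t : ℝ => f θstar + (1 - t) * (m / 2 * ‖θ - θstar‖ ^ 2)) := by
        continuity
      have := hc.tendsto 0
      simp only [sub_zero, one_mul] at this
      exact this.mono_left nhdsWithin_le_nhds
    exact le_of_tendsto htend hev
  -- pd integrable
  have hpd_int : Integrable pd := by
    by_contra h
    rw [integral_undef h] at hprob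
    norm_num at hprob
  -- pointwise gaussian domination of pd
  have hdom : ∀ θ, pd θ ≤ Real.exp (-f θstar) * Real.exp (-(m/2) * ‖θ - θstar‖ ^ 2) := by
    intro θ
    rw [← Real.exp_add]
    apply Real.exp_le_exp.2
    have := key θ
    linarith
  -- second moment integrable
  have hqpd_int : Integrable (fun θ => ‖θ - θstar‖ ^ 2 * pd θ) := by
    have hg : Integrable (fun θ : EuclideanSpace ℝ (Fin p) =>
        (Real.exp (-f θstar) * (4 / m)) * Real.exp (-(m/4) * ‖θ - θstar‖ ^ 2)) :=
      ((aux_gauss_int (p := p) (by linarith : (0:ℝ) < m/4)).comp_sub_right θstar).const_mul _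
    refine hg.mono ((continuous_norm.comp (continuous_id.sub continuous_const)).pow 2
      |>.mul hpdc).aestronglyMeasurable (Filter.Eventually.of_forall fun θ => ?_)
    have hq0 : (0:ℝ) ≤ ‖θ - θstar‖ ^ 2 := sq_nonneg _
    have h1 : ‖θ - θstar‖ ^ 2 * pd θ ≤
        ‖θ - θstar‖ ^ 2 * (Real.exp (-f θstar) * Real.exp (-(m/2) * ‖θ - θstar‖ ^ 2)) :=
      mul_le_mul_of_nonneg_left (hdom θ) hq0
    have h2 : ‖θ - θstar‖ ^ 2 ≤ (4 / m) * Real.exp ((m/4) * ‖θ - θstar‖ ^ 2) := by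
      have := Real.add_one_le_exp ((m/4) * ‖θ - θstar‖ ^ 2)
      have hmq : (m/4) * ‖θ - θstar‖ ^ 2 ≤ Real.exp ((m/4) * ‖θ - θstar‖ ^ 2) := by linarith
      calc ‖θ - θstar‖ ^ 2 = (4/m) * ((m/4) * ‖θ - θstar‖ ^ 2) := by field_simp
        _ ≤ (4 / m) * Real.exp ((m/4) * ‖θ - θstar‖ ^ 2) := by
            apply mul_le_mul_of_nonneg_left hmq; positivity
    have h3 : ‖θ - θstar‖ ^ 2 * Real.exp (-(m/2) * ‖θ - θstar‖ ^ 2) ≤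
        (4 / m) * Real.exp (-(m/4) * ‖θ - θstar‖ ^ 2) := by
      calc ‖θ - θstar‖ ^ 2 * Real.exp (-(m/2) * ‖θ - θstar‖ ^ 2)
          ≤ ((4 / m) * Real.exp ((m/4) * ‖θ - θstar‖ ^ 2)) *
            Real.exp (-(m/2) * ‖θ - θstar‖ ^ 2) :=
            mul_le_mul_of_nonneg_right h2 (Real.exp_pos _).le
        _ = (4 / m) * Real.exp (-(m/4) * ‖θ - θstar‖ ^ 2) := by
            rw [mul_assoc, ← Real.exp_add]; ring_nf
    rw [Real.norm_of_nonneg (mul_nonneg hq0 (hpdpos θ).le),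
      Real.norm_of_nonneg (by positivity)]
    calc ‖θ - θstar‖ ^ 2 * pd θ
        ≤ Real.exp (-f θstar) * (‖θ - θstar‖ ^ 2 * Real.exp (-(m/2) * ‖θ - θstar‖ ^ 2)) := by
          nlinarith [Real.exp_pos (-f θstar), hpdpos θ]
      _ ≤ Real.exp (-f θstar) * ((4 / m) * Real.exp (-(m/4) * ‖θ - θstar‖ ^ 2)) :=
          mul_le_mul_of_nonneg_left h3 (Real.exp_pos _).le
      _ = Real.exp (-f θstar) * (4 / m) * Real.exp (-(m/4) * ‖θ - θstar‖ ^ 2) := by ring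
  set M2 : ℝ := ∫ θ, ‖θ - θstar‖ ^ 2 * pd θ with hM2def
  have hM2nonneg : 0 ≤ M2 :=
    integral_nonneg fun θ => mul_nonneg (sq_nonneg _) (hpdpos θ).le
  -- per-s inequality
  have keyC : ∀ s : ℝ, s ∈ Set.Ioo (0:ℝ) 1 →
      s ^ p * (m / 2 * (1 + s) * M2) ≤ ∑ i ∈ Finset.range p, s ^ i := by
    intro s hs
    obtain ⟨hs0, hs1⟩ := hs
    set c : EuclideanSpace ℝ (Fin p) := θstar - s • θstar with hc
    have hco : ∀ θ : EuclideanSpace ℝ (Fin p),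
        s • θ + c = s • θ + (1 - s) • θstar := by
      intro θ; rw [hc, sub_smul, one_smul]
    -- change of variables
    have hE1 : ∫ θ, pd (s • θ + c) = (s ^ p)⁻¹ := by
      have h := Measure.integral_comp_smul_of_nonneg
        (volume : Measure (EuclideanSpace ℝ (Fin p))) (fun x => pd (x + c)) s (hR := hs0.le)
      rw [integral_add_right_eq_self pd c, finrank_euclideanSpace_fin, hprob] at h
      simpa using h
    have hshift_int : Integrable (fun θ => pd (s • θ + c)) := by
      have h1 : Integrable (fun x => pd (x + c)) := hpd_int.comp_add_right c
      exact h1.comp_smul hs0.ne'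
    -- pointwise bound
    have hpt : ∀ θ, pd θ + m / 2 * (1 - s ^ 2) * (‖θ - θstar‖ ^ 2 * pd θ)
        ≤ pd (s • θ + c) := by
      intro θ
      set Q : ℝ := ‖θ - θstar‖ ^ 2 with hQ
      have hQ0 : 0 ≤ Q := sq_nonneg _
      have hcvx := hconv.2 (Set.mem_univ θ) (Set.mem_univ θstar) hs0.le
        (by linarith : (0:ℝ) ≤ 1 - s) (by ring)
      simp only [smul_eq_mul] at hcvx
      have hk := key θ
      rw [← hQ] at hcvx hk
      have h1 : f (s • θ + (1 - s) • θstar) ≤ f θ - m / 2 * (1 - s ^ 2) * Q := by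
        nlinarith [mul_le_mul_of_nonneg_left hk (by linarith : (0:ℝ) ≤ 1 - s)]
      have hexp : 1 + m / 2 * (1 - s ^ 2) * Q ≤ Real.exp (m / 2 * (1 - s ^ 2) * Q) := by
        have := Real.add_one_le_exp (m / 2 * (1 - s ^ 2) * Q)
        linarith
      have h2 : pd θ * (1 + m / 2 * (1 - s ^ 2) * Q) ≤ pd (s • θ + (1 - s) • θstar) := by
        calc pd θ * (1 + m / 2 * (1 - s ^ 2) * Q)
            ≤ pd θ * Real.exp (m / 2 * (1 - s ^ 2) * Q) :=
              mul_le_mul_of_nonneg_left hexp (hpdpos θ).le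
          _ = Real.exp (-(f θ - m / 2 * (1 - s ^ 2) * Q)) := by
              rw [hpddef]; rw [← Real.exp_add]; ring_nf
          _ ≤ pd (s • θ + (1 - s) • θstar) := by
              rw [hpddef]; exact Real.exp_le_exp.2 (by linarith)
      rw [hco θ]
      calc pd θ + m / 2 * (1 - s ^ 2) * (Q * pd θ)
          = pd θ * (1 + m / 2 * (1 - s ^ 2) * Q) := by ring
        _ ≤ pd (s • θ + (1 - s) • θstar) := h2
    -- integrate
    have hmono : ∫ θ, (pd θ + m / 2 * (1 - s ^ 2) * (‖θ - θstar‖ ^ 2 * pd θ))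
        ≤ ∫ θ, pd (s • θ + c) := by
      refine integral_mono_of_nonneg (Filter.Eventually.of_forall fun θ => ?_) hshift_int
        (Filter.Eventually.of_forall hpt)
      have : (0:ℝ) ≤ m / 2 * (1 - s ^ 2) := by
        nlinarith [mul_pos (by linarith : (0:ℝ) < 1 - s) (by linarith : (0:ℝ) < 1 + s)]
      have := mul_nonneg this (mul_nonneg (sq_nonneg ‖θ - θstar‖) (hpdpos θ).le)
      have := (hpdpos θ).le
      simp only [Pi.zero_apply]
      linarith
    rw [integral_add hpd_int (hqpd_int.const_mul _), integral_const_mul, hprob, hE1,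
      ← hM2def] at hmono
    have hsp : (0:ℝ) < s ^ p := pow_pos hs0 p
    have h2 : s ^ p * (1 + m / 2 * (1 - s ^ 2) * M2) ≤ 1 := by
      calc s ^ p * (1 + m / 2 * (1 - s ^ 2) * M2) ≤ s ^ p * (s ^ p)⁻¹ :=
        mul_le_mul_of_nonneg_left hmono hsp.le
      _ = 1 := mul_inv_cancel₀ hsp.ne'
    have hgeom : (1 - s) * ∑ i ∈ Finset.range p, s ^ i = 1 - s ^ p := by
      have h := geom_sum_mul s p
      linear_combination (-1 : ℝ) * h
    have h3 : (1 - s) * (s ^ p * (m / 2 * (1 + s) * M2))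
        ≤ (1 - s) * ∑ i ∈ Finset.range p, s ^ i := by
      rw [hgeom]; nlinarith
    exact le_of_mul_le_mul_left h3 (by linarith)
  -- limit s → 1⁻
  have hM2m : m * M2 ≤ (p : ℝ) := by
    have hlhs : Tendsto (fun s : ℝ => s ^ p * (m / 2 * (1 + s) * M2))
        (nhdsWithin 1 (Set.Iio 1)) (nhds (m * M2)) := by
      have hc : Continuous (fun s : ℝ => s ^ p * (m / 2 * (1 + s) * M2)) :=
        (continuous_pow p).mul ((continuous_const.mul (continuous_const.add continuous_id)).mul continuous_const)
      have := hc.tendsto 1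
      have hval : (1:ℝ) ^ p * (m / 2 * (1 + 1) * M2) = m * M2 := by ring
      rw [hval] at this
      exact this.mono_left nhdsWithin_le_nhds
    have hrhs : Tendsto (fun s : ℝ => ∑ i ∈ Finset.range p, s ^ i)
        (nhdsWithin 1 (Set.Iio 1)) (nhds (p : ℝ)) := by
      have hc : Continuous (fun s : ℝ => ∑ i ∈ Finset.range p, s ^ i) :=
        continuous_finset_sum _ fun i _ => continuous_pow i
      have := hc.tendsto 1
      have hval : ∑ i ∈ Finset.range p, (1:ℝ) ^ i = (p : ℝ) := by simp
      rw [hval] at this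
      exact this.mono_left nhdsWithin_le_nhds
    refine le_of_tendsto_of_tendsto hlhs hrhs ?_
    filter_upwards [Ioo_mem_nhdsLT_of_mem (by norm_num : (1:ℝ) ∈ Set.Ioc 0 1)] with s hs
    exact keyC s hs
  have hM2le : M2 ≤ (p : ℝ) / m := by
    rw [le_div_iff₀ hm]; linarith
  -- Hölder / Jensen step
  have hra : a / 2 ≤ 1 := by linarith
  have hr0 : 0 < a / 2 := by linarith
  have hpow : ∀ θ : EuclideanSpace ℝ (Fin p),
      ‖θ - θstar‖ ^ a = (‖θ - θstar‖ ^ 2) ^ (a / 2) := by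
    intro θ
    rw [← Real.rpow_natCast ‖θ - θstar‖ 2, ← Real.rpow_mul (norm_nonneg _)]
    congr 1
    push_cast
    ring
  have hRHS0 : (0:ℝ) ≤ (p : ℝ) / m := div_nonneg (Nat.cast_nonneg p) hm.le
  rcases eq_or_lt_of_le hM2nonneg with hz | hpos
  · -- degenerate case M2 = 0
    have hae : (fun θ => ‖θ - θstar‖ ^ 2 * pd θ) =ᵐ[volume] 0 :=
      (integral_eq_zero_iff_of_nonneg
        (fun θ => mul_nonneg (sq_nonneg _) (hpdpos θ).le) hqpd_int).1 hz.symm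
    have hae2 : (fun θ => ‖θ - θstar‖ ^ a * pd θ) =ᵐ[volume] 0 := by
      filter_upwards [hae] with θ hθ
      simp only [Pi.zero_apply] at hθ ⊢
      have hq : ‖θ - θstar‖ ^ 2 = 0 := by
        rcases mul_eq_zero.1 hθ with h | h
        · exact h
        · exact absurd h (hpdpos θ).ne'
      have : ‖θ - θstar‖ = 0 := by
        have := sq_eq_zero_iff.1 hq; exact this
      rw [this, Real.zero_rpow ha.ne', zero_mul]
    have hz2 : ∫ θ, ‖θ - θstar‖ ^ a * pd θ = 0 := by
      rw [integral_congr_ae hae2]; simp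
    rw [hz2]
    exact Real.rpow_nonneg hRHS0 _
  · -- main case M2 > 0
    have hptE : ∀ θ, ‖θ - θstar‖ ^ a * pd θ ≤
        M2 ^ (a / 2) * ((a / 2 / M2) * (‖θ - θstar‖ ^ 2 * pd θ) + (1 - a / 2) * pd θ) := by
      intro θ
      set Q : ℝ := ‖θ - θstar‖ ^ 2 with hQ
      have hQ0 : 0 ≤ Q := sq_nonneg _
      have hgm := Real.geom_mean_le_arith_mean2_weighted hr0.le
        (by linarith : (0:ℝ) ≤ 1 - a / 2) (div_nonneg hQ0 hM2nonneg) zero_le_one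
        (by ring)
      rw [Real.one_rpow, mul_one, mul_one] at hgm
      -- (Q / M2) ^ (a/2) ≤ a/2 * (Q/M2) + (1 - a/2)
      have hQr : Q ^ (a / 2) = M2 ^ (a / 2) * (Q / M2) ^ (a / 2) := by
        rw [← Real.mul_rpow hM2nonneg (div_nonneg hQ0 hM2nonneg)]
        rw [mul_div_cancel₀ _ hpos.ne']
      rw [hpow θ, ← hQ, hQr]
      have h1 : (Q / M2) ^ (a / 2) * pd θ ≤ (a / 2 * (Q / M2) + (1 - a / 2)) * pd θ :=
        mul_le_mul_of_nonneg_right hgm (hpdpos θ).le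
      have h2 : M2 ^ (a / 2) * ((Q / M2) ^ (a / 2) * pd θ) ≤
          M2 ^ (a / 2) * ((a / 2 * (Q / M2) + (1 - a / 2)) * pd θ) :=
        mul_le_mul_of_nonneg_left h1 (Real.rpow_nonneg hM2nonneg _)
      calc M2 ^ (a / 2) * (Q / M2) ^ (a / 2) * pd θ
          = M2 ^ (a / 2) * ((Q / M2) ^ (a / 2) * pd θ) := by ring
        _ ≤ M2 ^ (a / 2) * ((a / 2 * (Q / M2) + (1 - a / 2)) * pd θ) := h2
        _ = M2 ^ (a / 2) * ((a / 2 / M2) * (Q * pd θ) + (1 - a / 2) * pd θ) := by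
            ring
    have hbig_int : Integrable (fun θ =>
        M2 ^ (a / 2) * ((a / 2 / M2) * (‖θ - θstar‖ ^ 2 * pd θ) + (1 - a / 2) * pd θ)) :=
      (((hqpd_int.const_mul (a / 2 / M2)).add (hpd_int.const_mul (1 - a / 2))).const_mul _)
    have hmonoE : ∫ θ, ‖θ - θstar‖ ^ a * pd θ ≤ ∫ θ,
        M2 ^ (a / 2) * ((a / 2 / M2) * (‖θ - θstar‖ ^ 2 * pd θ) + (1 - a / 2) * pd θ) := by
      refine integral_mono_of_nonneg (Filter.Eventually.of_forall fun θ => ?_) hbig_int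
        (Filter.Eventually.of_forall hptE)
      simp only [Pi.zero_apply]
      exact mul_nonneg (Real.rpow_nonneg (norm_nonneg _) _) (hpdpos θ).le
    have hbig_val : ∫ θ, M2 ^ (a / 2) *
        ((a / 2 / M2) * (‖θ - θstar‖ ^ 2 * pd θ) + (1 - a / 2) * pd θ) = M2 ^ (a / 2) := by
      rw [integral_const_mul, integral_add (hqpd_int.const_mul _) (hpd_int.const_mul _),
        integral_const_mul, integral_const_mul, hprob, ← hM2def]
      rw [mul_one, div_mul_cancel₀ _ hpos.ne']
      have h1 : a / 2 + (1 - a / 2) = 1 := by ring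
      rw [h1, mul_one]
    calc ∫ θ, ‖θ - θstar‖ ^ a * pd θ ≤ M2 ^ (a / 2) := by rw [← hbig_val]; exact hmonoE
      _ ≤ ((p : ℝ) / m) ^ (a / 2) := Real.rpow_le_rpow hM2nonneg hM2le hr0.le
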